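/- Let p > 4 be prime and n = p. For the input X with x_0 = 1 and x_i = 0 for 0 < i < p, the sensitivity of the simplified weighted sum function at X is exactly 1. -/

import Mathlib

open Finset

/-- the weighted sum `s(X) = (∑ k, k·x_k) mod n`, as an element of `ZMod n`. -/
def wsS {n : ℕ} [NeZero n] (X : ZMod n → Bool) : ZMod n :=
  ∑ i : ZMod n, if X i then i else 0

/-- the simplified weighted sum function `f(X) = x_{s(X)}`. -/
def wsF {n : ℕ} [NeZero n] (X : ZMod n → Bool) : Bool := X (wsS X)

/-- the sensitivity `Sen(f, X)`: the number of coordinates whose flip changes `f`. -/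
def wsSens {n : ℕ} [NeZero n] (X : ZMod n → Bool) : ℕ :=
  (Finset.univ.filter fun i : ZMod n =>
    wsF (Function.update X i (!X i)) ≠ wsF X).card

theorem stmt_10 (p : ℕ) (hp : p.Prime) (hp4 : 4 < p) [NeZero p] :
    wsSens (fun i : ZMod p => decide (i = 0)) = 1 := by
  set X : ZMod p → Bool := fun i : ZMod p => decide (i = 0) with hXdef
  have hsX : wsS X = 0 := by
    unfold wsS
    apply Finset.sum_eq_zero
    intro i _
    by_cases h : i = 0 <;> simp [hXdef, h]
  have hfX : wsF X = true := by
    rw [wsF, hsX]; simp [hXdef]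
  have key : ∀ i : ZMod p,
      (wsF (Function.update X i (!X i)) ≠ wsF X) ↔ i = 0 := by
    intro i
    by_cases hi : i = 0
    · subst hi
      have hY : Function.update X (0 : ZMod p) (!X 0) = fun _ => false := by
        funext j
        by_cases hj : j = 0 <;> simp [Function.update, hj, hXdef]
      rw [hY]
      have : wsF (fun _ : ZMod p => false) = false := by
        simp [wsF]
      simp [this, hfX]
    · have hYi : Function.update X i (!X i) i = true := by
        simp [Function.update, hXdef, hi]
      have hs : wsS (Function.update X i (!X i)) = i := by
        unfold wsS
        rw [Finset.sum_eq_single i]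
        · rw [hYi]; simp
        · intro b _ hb
          have hbv : Function.update X i (!X i) b = X b := by
            simp [Function.update, hb]
          rw [hbv]
          by_cases hb0 : b = 0 <;> simp [hXdef, hb0]
        · intro h; exact absurd (Finset.mem_univ i) h
      have : wsF (Function.update X i (!X i)) = true := by
        rw [wsF, hs, hYi]
      simp [this, hfX, hi]
  have hset : (Finset.univ.filter fun i : ZMod p =>
      wsF (Function.update X i (!X i)) ≠ wsF X) = {0} := by
    ext i
    simp [key i]
  rw [wsSens, hset, Finset.card_singleton]
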